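/- Let G be an ordered mean and 𝔸 = [Aᵢⱼ] an n×k array of positive definite operators with mI ≤ Aᵢⱼ ≤ MI. Then for any t > 0 and probability vectors ω ∈ Δₙ, λ ∈ Δₖ: Gₙ(ω; Gₖ(λ; 𝔸¹), …, Gₖ(λ; 𝔸ⁿ)) ≤ t·Gₖ(λ; Gₙ(ω; 𝔸₁), …, Gₙ(ω; 𝔸ₖ)) + ρ_{M,m}(t)·I, where ρ_{M,m}(t) = (1−t)m if t ≥ M/m, M + m − 2√(tMm) if m/M ≤ t ≤ M/m, and (1−t)M if t ≤ m/M. -/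

import Mathlib

open ContinuousLinearMap in
/-- A positive definite (positive invertible) bounded operator on a Hilbert space. -/
def IsPosDef {H : Type*} [NormedAddCommGroup H] [InnerProductSpace ℂ H] [CompleteSpace H]
    (A : H →L[ℂ] H) : Prop := A.IsPositive ∧ IsUnit A

/-- A positive probability vector. -/
def IsProbVec {n : ℕ} (w : Fin n → ℝ) : Prop := (∀ i, 0 < w i) ∧ ∑ i, w i = 1

/-- An ordered mean: a family of weighted means of positive definite operators satisfying
homogeneity, monotonicity, joint concavity and the arithmetic-`G`-harmonic mean inequalities
with respect to the Loewner order. -/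
structure OrderedMean (H : Type*) [NormedAddCommGroup H] [InnerProductSpace ℂ H]
    [CompleteSpace H] where
  G : ∀ n : ℕ, (Fin n → ℝ) → (Fin n → (H →L[ℂ] H)) → (H →L[ℂ] H)
  posDef : ∀ n w A, IsProbVec w → (∀ i, IsPosDef (A i)) → IsPosDef (G n w A)
  homog : ∀ n w A (a : ℝ), IsProbVec w → (∀ i, IsPosDef (A i)) → 0 < a →
    G n w (fun i => a • A i) = a • G n w A
  mono : ∀ n w A B, IsProbVec w → (∀ i, IsPosDef (A i)) → (∀ i, IsPosDef (B i)) →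
    (∀ i, B i ≤ A i) → G n w B ≤ G n w A
  concave : ∀ n w A B (s : ℝ), IsProbVec w → (∀ i, IsPosDef (A i)) → (∀ i, IsPosDef (B i)) →
    0 ≤ s → s ≤ 1 →
    (1 - s) • G n w A + s • G n w B ≤ G n w (fun i => (1 - s) • A i + s • B i)
  harm_le : ∀ n w A, IsProbVec w → (∀ i, IsPosDef (A i)) →
    Ring.inverse (∑ i, w i • Ring.inverse (A i)) ≤ G n w A
  le_arith : ∀ n w A, IsProbVec w → (∀ i, IsPosDef (A i)) →
    G n w A ≤ ∑ i, w i • A i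

/-- The parameterized ordered mean `G^μ`. -/
noncomputable def OrderedMean.pMean {H : Type*} [NormedAddCommGroup H] [InnerProductSpace ℂ H]
    [CompleteSpace H] (G : OrderedMean H) (μ : ℝ) (n : ℕ) (w : Fin n → ℝ)
    (A : Fin n → (H →L[ℂ] H)) : H →L[ℂ] H :=
  if 0 ≤ μ then G.G n w (fun i => A i + μ • 1) - μ • 1
  else Ring.inverse (G.G n w (fun i => Ring.inverse (A i) + (-μ) • 1) - (-μ) • 1)

/-- The constant `ρ_{M,m}(t)`. -/
noncomputable def rhoConst (M m t : ℝ) : ℝ :=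
  if M / m ≤ t then (1 - t) * m
  else if t ≤ m / M then (1 - t) * M
  else M + m - 2 * Real.sqrt (t * M * m)

variable {H : Type*} [NormedAddCommGroup H] [InnerProductSpace ℂ H] [CompleteSpace H]

set_option synthInstance.maxHeartbeats 1000000
set_option maxHeartbeats 2000000
set_option linter.unusedVariables false

section Helpers

lemma my_sa_smul_one (c : ℝ) : IsSelfAdjoint (c • (1 : H →L[ℂ] H)) := by
  have : c • (1 : H →L[ℂ] H) = algebraMap ℝ (H →L[ℂ] H) c :=
    (Algebra.algebraMap_eq_smul_one c).symm
  rw [this]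
  exact IsSelfAdjoint.algebraMap _ (IsSelfAdjoint.all c)

lemma my_smul_nonneg {c : ℝ} (hc : 0 ≤ c) {a : H →L[ℂ] H} (ha : 0 ≤ a) : 0 ≤ c • a := by
  have hsa : IsSelfAdjoint (Real.sqrt c • (1 : H →L[ℂ] H)) := my_sa_smul_one _
  have h := hsa.conjugate_nonneg ha
  calc (0 : H →L[ℂ] H) ≤ (Real.sqrt c • 1) * a * (Real.sqrt c • 1) := h
    _ = c • a := by
      rw [smul_mul_assoc, one_mul, mul_smul_comm, mul_one, smul_smul, Real.mul_self_sqrt hc]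

lemma my_smul_le_smul {c : ℝ} (hc : 0 ≤ c) {a b : H →L[ℂ] H} (h : a ≤ b) : c • a ≤ c • b := by
  rw [← sub_nonneg, ← smul_sub]
  exact my_smul_nonneg hc (sub_nonneg.mpr h)

lemma my_sa_of_lb {a : H →L[ℂ] H} {α : ℝ} (h1 : α • 1 ≤ a) : IsSelfAdjoint a := by
  have h0 : IsSelfAdjoint (a - α • (1 : H →L[ℂ] H)) :=
    IsSelfAdjoint.of_nonneg (sub_nonneg.mpr h1)
  have := h0.add (my_sa_smul_one (H := H) α)
  simpa using this

lemma my_smul_one_nonneg {α : ℝ} (hα : 0 ≤ α) : (0 : H →L[ℂ] H) ≤ α • 1 :=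
  my_smul_nonneg hα (zero_le_one' (H →L[ℂ] H))

lemma my_unit_of_lb {a : H →L[ℂ] H} {α : ℝ} (hα : 0 < α) (h1 : α • 1 ≤ a) : IsUnit a := by
  have hu : IsUnit (α • (1 : H →L[ℂ] H)) := by
    have : α • (1 : H →L[ℂ] H) = algebraMap ℝ (H →L[ℂ] H) α :=
      (Algebra.algebraMap_eq_smul_one α).symm
    rw [this]
    exact (isUnit_iff_ne_zero.mpr hα.ne').map (algebraMap ℝ (H →L[ℂ] H))
  exact CStarAlgebra.isUnit_of_le _ h1 (IsStrictlyPositive.iff_of_unital.mpr ⟨my_smul_one_nonneg hα.le, hu⟩)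

lemma my_posdef_of_lb {a : H →L[ℂ] H} {α : ℝ} (hα : 0 < α) (h1 : α • 1 ≤ a) : IsPosDef a := by
  refine ⟨?_, my_unit_of_lb hα h1⟩
  rw [← ContinuousLinearMap.nonneg_iff_isPositive]
  exact (my_smul_one_nonneg hα.le).trans h1

lemma my_spec_mem {a : H →L[ℂ] H} {α β : ℝ} (h1 : α • 1 ≤ a) (h2 : a ≤ β • 1) :
    ∀ x ∈ spectrum ℝ a, x ∈ Set.Icc α β := by
  have hsa : IsSelfAdjoint a := my_sa_of_lb h1
  have e1 : α • (1 : H →L[ℂ] H) = algebraMap ℝ (H →L[ℂ] H) α :=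
    (Algebra.algebraMap_eq_smul_one α).symm
  have e2 : β • (1 : H →L[ℂ] H) = algebraMap ℝ (H →L[ℂ] H) β :=
    (Algebra.algebraMap_eq_smul_one β).symm
  rw [e1] at h1; rw [e2] at h2
  intro x hx
  exact ⟨(algebraMap_le_iff_le_spectrum (a := a) hsa).mp h1 x hx,
    (le_algebraMap_iff_spectrum_le (a := a) hsa).mp h2 x hx⟩

lemma my_cont {a : H →L[ℂ] H} {α β : ℝ} (hα : 0 < α) (h1 : α • 1 ≤ a) (h2 : a ≤ β • 1)
    (c₁ c₂ : ℝ) : ContinuousOn (fun x : ℝ => c₁ * x⁻¹ + c₂ * x) (spectrum ℝ a) := by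
  have hspec := my_spec_mem h1 h2
  have hne : ∀ x ∈ spectrum ℝ a, x ≠ 0 := fun x hx => (hα.trans_le (hspec x hx).1).ne'
  exact (continuousOn_const.mul (continuousOn_id.inv₀ hne)).add
    (continuousOn_const.mul continuousOn_id)

lemma my_combo_eq {a : H →L[ℂ] H} {α β : ℝ} (hα : 0 < α) (h1 : α • 1 ≤ a) (h2 : a ≤ β • 1)
    (c₁ c₂ : ℝ) :
    cfc (fun x : ℝ => c₁ * x⁻¹ + c₂ * x) a = c₁ • Ring.inverse a + c₂ • a := by
  have hsa := my_sa_of_lb h1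
  have hspec := my_spec_mem h1 h2
  have hne : ∀ x ∈ spectrum ℝ a, x ≠ 0 := fun x hx => (hα.trans_le (hspec x hx).1).ne'
  have hinvcont : ContinuousOn (fun x : ℝ => x⁻¹) (spectrum ℝ a) :=
    continuousOn_id.inv₀ hne
  have h1cont : ContinuousOn (fun x : ℝ => c₁ * x⁻¹) (spectrum ℝ a) :=
    continuousOn_const.mul hinvcont
  have h2cont : ContinuousOn (fun x : ℝ => c₂ * x) (spectrum ℝ a) :=
    continuousOn_const.mul continuousOn_id
  have hu := my_unit_of_lb hα h1
  have hinv : cfc (fun x : ℝ => x⁻¹) a = Ring.inverse a := by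
    have h := cfc_inv_id (R := ℝ) hu.unit (by rw [IsUnit.unit_spec]; exact hsa)
    rw [IsUnit.unit_spec] at h
    rw [h, ← Ring.inverse_unit hu.unit, IsUnit.unit_spec]
  rw [cfc_add a _ _ h1cont h2cont, cfc_const_mul _ _ a hinvcont,
    cfc_const_mul_id c₂ a hsa, hinv]

lemma my_combo_le {a : H →L[ℂ] H} {α β : ℝ} (hα : 0 < α) (h1 : α • 1 ≤ a) (h2 : a ≤ β • 1)
    (c₁ c₂ c₃ : ℝ) (h : ∀ x ∈ Set.Icc α β, c₁ * x⁻¹ + c₂ * x ≤ c₃) :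
    c₁ • Ring.inverse a + c₂ • a ≤ c₃ • 1 := by
  have hsa := my_sa_of_lb h1
  have hspec := my_spec_mem h1 h2
  have e : c₃ • (1 : H →L[ℂ] H) = algebraMap ℝ (H →L[ℂ] H) c₃ :=
    (Algebra.algebraMap_eq_smul_one c₃).symm
  rw [← my_combo_eq hα h1 h2, e]
  exact cfc_le_algebraMap _ _ _ (fun x hx => h x (hspec x hx)) (my_cont hα h1 h2 c₁ c₂) hsa

lemma my_le_combo {a : H →L[ℂ] H} {α β : ℝ} (hα : 0 < α) (h1 : α • 1 ≤ a) (h2 : a ≤ β • 1)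
    (c₁ c₂ c₃ : ℝ) (h : ∀ x ∈ Set.Icc α β, c₃ ≤ c₁ * x⁻¹ + c₂ * x) :
    c₃ • 1 ≤ c₁ • Ring.inverse a + c₂ • a := by
  have hsa := my_sa_of_lb h1
  have hspec := my_spec_mem h1 h2
  have e : c₃ • (1 : H →L[ℂ] H) = algebraMap ℝ (H →L[ℂ] H) c₃ :=
    (Algebra.algebraMap_eq_smul_one c₃).symm
  rw [← my_combo_eq hα h1 h2, e]
  exact algebraMap_le_cfc _ _ _ (fun x hx => h x (hspec x hx)) (my_cont hα h1 h2 c₁ c₂) hsa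

lemma my_scalar1 {m M : ℝ} (hm : 0 < m) (hmM : m ≤ M) :
    ∀ x ∈ Set.Icc m M, (M * m) * x⁻¹ + 1 * x ≤ M + m := by
  intro x hx
  have hx0 : 0 < x := hm.trans_le hx.1
  have key : M * m + x * x ≤ (M + m) * x := by
    nlinarith [mul_nonneg (sub_nonneg.2 hx.1) (sub_nonneg.2 hx.2)]
  have e1 : (M * m) * x⁻¹ + 1 * x = (M * m + x * x) * x⁻¹ := by
    field_simp
  rw [e1]
  calc (M * m + x * x) * x⁻¹ ≤ ((M + m) * x) * x⁻¹ :=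
        mul_le_mul_of_nonneg_right key (inv_nonneg.2 hx0.le)
    _ = M + m := by field_simp

lemma my_scalar_inv_ub {α β : ℝ} (hα : 0 < α) :
    ∀ x ∈ Set.Icc α β, (1 : ℝ) * x⁻¹ + 0 * x ≤ α⁻¹ := by
  intro x hx
  have hx0 : 0 < x := hα.trans_le hx.1
  simp only [one_mul, zero_mul, add_zero]
  exact inv_anti₀ hα hx.1

lemma my_scalar_inv_lb {α β : ℝ} (hα : 0 < α) (hβ : α ≤ β) :
    ∀ x ∈ Set.Icc α β, β⁻¹ ≤ (1 : ℝ) * x⁻¹ + 0 * x := by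
  intro x hx
  have hx0 : 0 < x := hα.trans_le hx.1
  simp only [one_mul, zero_mul, add_zero]
  exact inv_anti₀ hx0 hx.2

lemma my_scalar2 {m M t : ℝ} (hm : 0 < m) (hmM : m ≤ M) (ht : 0 < t) :
    ∀ x ∈ Set.Icc M⁻¹ m⁻¹, M + m - rhoConst M m t ≤ t * x⁻¹ + (M * m) * x := by
  have hM : 0 < M := hm.trans_le hmM
  intro x hx
  have hx0 : 0 < x := (inv_pos.2 hM).trans_le hx.1
  have hq : (M + m - rhoConst M m t) * x ≤ t + M * m * (x * x) := by
    unfold rhoConst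
    split_ifs with hc1 hc2
    · have hmx : m * x ≤ 1 := by
        calc m * x ≤ m * m⁻¹ := mul_le_mul_of_nonneg_left hx.2 hm.le
          _ = 1 := mul_inv_cancel₀ hm.ne'
      have hMx : M * x ≤ t := by
        calc M * x ≤ M * m⁻¹ := mul_le_mul_of_nonneg_left hx.2 hM.le
          _ = M / m := (div_eq_mul_inv M m).symm
          _ ≤ t := hc1
      nlinarith [mul_nonneg (sub_nonneg.2 hmx) (sub_nonneg.2 hMx)]
    · have hMx : 1 ≤ M * x := by
        calc (1 : ℝ) = M * M⁻¹ := (mul_inv_cancel₀ hM.ne').symm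
          _ ≤ M * x := mul_le_mul_of_nonneg_left hx.1 hM.le
      have hmx : t ≤ m * x := by
        calc t ≤ m / M := hc2
          _ = m * M⁻¹ := div_eq_mul_inv m M
          _ ≤ m * x := mul_le_mul_of_nonneg_left hx.1 hm.le
      nlinarith [mul_nonneg (sub_nonneg.2 hMx) (sub_nonneg.2 hmx)]
    · have h1 : Real.sqrt t ^ 2 = t := Real.sq_sqrt ht.le
      have h2 : Real.sqrt (M * m) ^ 2 = M * m := Real.sq_sqrt (mul_nonneg hM.le hm.le)
      have h3 : Real.sqrt (t * M * m) = Real.sqrt t * Real.sqrt (M * m) := by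
        rw [mul_assoc, Real.sqrt_mul ht.le]
      nlinarith [sq_nonneg (Real.sqrt t - Real.sqrt (M * m) * x)]
  have e1 : t * x⁻¹ + (M * m) * x = (t + M * m * (x * x)) * x⁻¹ := by
    field_simp
  rw [e1]
  calc M + m - rhoConst M m t = ((M + m - rhoConst M m t) * x) * x⁻¹ := by
        field_simp
    _ ≤ (t + M * m * (x * x)) * x⁻¹ := mul_le_mul_of_nonneg_right hq (inv_nonneg.2 hx0.le)

lemma my_inv_lb {a : H →L[ℂ] H} {α β : ℝ} (hα : 0 < α) (hαβ : α ≤ β)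
    (h1 : α • 1 ≤ a) (h2 : a ≤ β • 1) : β⁻¹ • 1 ≤ Ring.inverse a := by
  have h := my_le_combo hα h1 h2 1 0 β⁻¹ (my_scalar_inv_lb hα hαβ)
  simpa using h

lemma my_inv_ub {a : H →L[ℂ] H} {α β : ℝ} (hα : 0 < α)
    (h1 : α • 1 ≤ a) (h2 : a ≤ β • 1) : Ring.inverse a ≤ α⁻¹ • 1 := by
  have h := my_combo_le hα h1 h2 1 0 α⁻¹ (my_scalar_inv_ub hα)
  simpa using h

lemma my_key {a : H →L[ℂ] H} {m M : ℝ} (hm : 0 < m) (hmM : m ≤ M)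
    (h1 : m • 1 ≤ a) (h2 : a ≤ M • 1) :
    (M * m) • Ring.inverse a + a ≤ (M + m) • 1 := by
  have h := my_combo_le hm h1 h2 (M * m) 1 (M + m) (my_scalar1 hm hmM)
  simpa using h

lemma my_sum_le {n : ℕ} {w : Fin n → ℝ} (hw : IsProbVec w) {B : Fin n → (H →L[ℂ] H)} {c : ℝ}
    (h : ∀ i, B i ≤ c • 1) : ∑ i, w i • B i ≤ c • 1 := by
  calc ∑ i, w i • B i ≤ ∑ i, w i • (c • (1 : H →L[ℂ] H)) :=
        Finset.sum_le_sum (fun i _ => my_smul_le_smul (hw.1 i).le (h i))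
    _ = c • 1 := by
      simp only [smul_smul, ← Finset.sum_smul, ← Finset.sum_mul, hw.2, one_mul]

lemma my_le_sum {n : ℕ} {w : Fin n → ℝ} (hw : IsProbVec w) {B : Fin n → (H →L[ℂ] H)} {c : ℝ}
    (h : ∀ i, c • 1 ≤ B i) : c • 1 ≤ ∑ i, w i • B i := by
  calc (c • (1 : H →L[ℂ] H)) = ∑ i, w i • (c • (1 : H →L[ℂ] H)) := by
        simp only [smul_smul, ← Finset.sum_smul, ← Finset.sum_mul, hw.2, one_mul]
    _ ≤ ∑ i, w i • B i :=
        Finset.sum_le_sum (fun i _ => my_smul_le_smul (hw.1 i).le (h i))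

lemma my_inverse_inverse {a : H →L[ℂ] H} (hu : IsUnit a) :
    Ring.inverse (Ring.inverse a) = a := by
  obtain ⟨u, rfl⟩ := hu
  simp [Ring.inverse_unit]

end Helpers

theorem mixture_rho_bound (G : OrderedMean H) {n k : ℕ} (w : Fin n → ℝ) (l : Fin k → ℝ)
    (hw : IsProbVec w) (hl : IsProbVec l) (A : Fin n → Fin k → (H →L[ℂ] H))
    (hA : ∀ i j, IsPosDef (A i j)) (m M : ℝ) (hm : 0 < m) (hmM : m ≤ M)
    (hbd : ∀ i j, m • (1 : H →L[ℂ] H) ≤ A i j ∧ A i j ≤ M • (1 : H →L[ℂ] H)) (t : ℝ) (ht : 0 < t) :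
    G.G n w (fun i => G.G k l (A i)) ≤
      t • G.G k l (fun j => G.G n w (fun i => A i j)) + rhoConst M m t • (1 : H →L[ℂ] H) := by
  have hM : 0 < M := hm.trans_le hmM
  set ρ := rhoConst M m t with hρ
  -- row arithmetic means
  set Srow : Fin n → (H →L[ℂ] H) := fun i => ∑ j, l j • A i j with hSrowdef
  have hSrow_lb : ∀ i, m • 1 ≤ Srow i := fun i => my_le_sum hl (fun j => (hbd i j).1)
  have hSrow_ub : ∀ i, Srow i ≤ M • 1 := fun i => my_sum_le hl (fun j => (hbd i j).2)
  have hSrow_pd : ∀ i, IsPosDef (Srow i) := fun i => my_posdef_of_lb hm (hSrow_lb i)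
  -- inverse bounds
  have hinv_lb : ∀ i j, M⁻¹ • 1 ≤ Ring.inverse (A i j) :=
    fun i j => my_inv_lb hm hmM (hbd i j).1 (hbd i j).2
  have hinv_ub : ∀ i j, Ring.inverse (A i j) ≤ m⁻¹ • 1 :=
    fun i j => my_inv_ub hm (hbd i j).1 (hbd i j).2
  -- column harmonic denominators
  set U : Fin k → (H →L[ℂ] H) := fun j => ∑ i, w i • Ring.inverse (A i j) with hUdef
  have hU_lb : ∀ j, M⁻¹ • 1 ≤ U j := fun j => my_le_sum hw (fun i => hinv_lb i j)
  have hU_ub : ∀ j, U j ≤ m⁻¹ • 1 := fun j => my_sum_le hw (fun i => hinv_ub i j)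
  set Hh : Fin k → (H →L[ℂ] H) := fun j => Ring.inverse (U j) with hHhdef
  have hinvm : (m⁻¹)⁻¹ = m := inv_inv m
  have hinvM : (M⁻¹)⁻¹ = M := inv_inv M
  have hinvle : M⁻¹ ≤ m⁻¹ := inv_anti₀ hm hmM
  have hHh_lb : ∀ j, m • 1 ≤ Hh j := fun j => by
    have := my_inv_lb (inv_pos.2 hM) hinvle (hU_lb j) (hU_ub j)
    rwa [hinvm] at this
  have hHh_ub : ∀ j, Hh j ≤ M • 1 := fun j => by
    have := my_inv_ub (inv_pos.2 hM) (hU_lb j) (hU_ub j)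
    rwa [hinvM] at this
  have hHh_pd : ∀ j, IsPosDef (Hh j) := fun j => my_posdef_of_lb hm (hHh_lb j)
  have hU_unit : ∀ j, IsUnit (U j) := fun j => my_unit_of_lb (inv_pos.2 hM) (hU_lb j)
  -- row inverse sums and T
  set V : Fin n → (H →L[ℂ] H) := fun i => ∑ j, l j • Ring.inverse (A i j) with hVdef
  have hV_lb : ∀ i, M⁻¹ • 1 ≤ V i := fun i => my_le_sum hl (fun j => hinv_lb i j)
  have hV_ub : ∀ i, V i ≤ m⁻¹ • 1 := fun i => my_sum_le hl (fun j => hinv_ub i j)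
  set T : H →L[ℂ] H := ∑ i, w i • V i with hTdef
  have hT_lb : M⁻¹ • 1 ≤ T := my_le_sum hw hV_lb
  have hT_ub : T ≤ m⁻¹ • 1 := my_sum_le hw hV_ub
  have hTswap : T = ∑ j, l j • U j := by
    simp only [hTdef, hVdef, hUdef, Finset.smul_sum, smul_smul]
    rw [Finset.sum_comm]
    simp only [mul_comm]
  -- step 1 : LHS ≤ arithmetic mean
  have hGrow_pd : ∀ i, IsPosDef (G.G k l (A i)) := fun i => G.posDef k l (A i) hl (hA i)
  have step1a : G.G n w (fun i => G.G k l (A i)) ≤ G.G n w Srow :=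
    G.mono n w Srow (fun i => G.G k l (A i)) hw hSrow_pd hGrow_pd
      (fun i => G.le_arith k l (A i) hl (hA i))
  have step1b : G.G n w Srow ≤ ∑ i, w i • Srow i := G.le_arith n w Srow hw hSrow_pd
  -- step 2 : arithmetic mean + (M*m) T ≤ (M+m) 1
  have hkey : ∀ i j, (M * m) • Ring.inverse (A i j) + A i j ≤ (M + m) • 1 :=
    fun i j => my_key hm hmM (hbd i j).1 (hbd i j).2
  have hrow : ∀ i, (M * m) • V i + Srow i ≤ (M + m) • 1 := fun i => by
    have e : (M * m) • V i + Srow i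
        = ∑ j, l j • ((M * m) • Ring.inverse (A i j) + A i j) := by
      simp only [hVdef, hSrowdef, Finset.smul_sum, smul_add, smul_smul,
        Finset.sum_add_distrib, mul_comm]
    rw [e]
    exact my_sum_le hl (fun j => hkey i j)
  have step2 : (M * m) • T + ∑ i, w i • Srow i ≤ (M + m) • 1 := by
    have e : (M * m) • T + ∑ i, w i • Srow i
        = ∑ i, w i • ((M * m) • V i + Srow i) := by
      simp only [hTdef, Finset.smul_sum, smul_add, smul_smul,
        Finset.sum_add_distrib, mul_comm]
    rw [e]
    exact my_sum_le hw hrow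
  -- step 3 : Kantorovich-type bound
  have hTinv : (M + m - ρ) • (1 : H →L[ℂ] H) ≤ t • Ring.inverse T + (M * m) • T :=
    my_le_combo (inv_pos.2 hM) hT_lb hT_ub t (M * m) (M + m - ρ) (my_scalar2 hm hmM ht)
  have chain3 : (M + m) • (1 : H →L[ℂ] H) - (M * m) • T ≤ t • Ring.inverse T + ρ • 1 := by
    rw [sub_smul] at hTinv
    rw [sub_le_iff_le_add] at hTinv
    rw [sub_le_iff_le_add]
    rwa [add_right_comm] at hTinv
  -- step 4 : harmonic mean bound for the right-hand side
  have hGcol_pd : ∀ j, IsPosDef (G.G n w (fun i => A i j)) :=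
    fun j => G.posDef n w (fun i => A i j) hw (fun i => hA i j)
  have hHh_le : ∀ j, Hh j ≤ G.G n w (fun i => A i j) :=
    fun j => G.harm_le n w (fun i => A i j) hw (fun i => hA i j)
  have step4a : G.G k l Hh ≤ G.G k l (fun j => G.G n w (fun i => A i j)) :=
    G.mono k l (fun j => G.G n w (fun i => A i j)) Hh hl hGcol_pd hHh_pd hHh_le
  have step4b : Ring.inverse (∑ j, l j • Ring.inverse (Hh j)) ≤ G.G k l Hh :=
    G.harm_le k l Hh hl hHh_pd
  have hinvinv : ∀ j, Ring.inverse (Hh j) = U j := fun j => my_inverse_inverse (hU_unit j)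
  have step4 : Ring.inverse T ≤ G.G k l (fun j => G.G n w (fun i => A i j)) := by
    rw [hTswap]
    calc Ring.inverse (∑ j, l j • U j)
        = Ring.inverse (∑ j, l j • Ring.inverse (Hh j)) := by simp only [hinvinv]
      _ ≤ G.G k l Hh := step4b
      _ ≤ G.G k l (fun j => G.G n w (fun i => A i j)) := step4a
  -- assemble
  have chain2 : ∑ i, w i • Srow i ≤ (M + m) • (1 : H →L[ℂ] H) - (M * m) • T := by
    rw [le_sub_iff_add_le, add_comm]
    exact step2
  have chain4 : t • Ring.inverse T + ρ • (1 : H →L[ℂ] H)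
      ≤ t • G.G k l (fun j => G.G n w (fun i => A i j)) + ρ • 1 :=
    add_le_add_left (my_smul_le_smul ht.le step4) _
  exact (((step1a.trans step1b).trans chain2).trans chain3).trans chain4
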